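/- The square spiral trajectory S : ℕ → ℤ×ℤ (defined by S(0) = (0,0) and consecutive loops of 2p−1 steps North, 2p−1 steps West, 2p steps South, 2p steps East for p = 1, 2, ...) is injective: it visits a new node at every step; i.e., S(t) ≠ S(t') for all t ≠ t'. -/

import Mathlib

/-- Direction of global step `t` of the square spiral, where `p` means the agent
is currently in loop number `p+1` (loop `p+1` consists of `2p+1` steps North,
`2p+1` steps West, `2p+2` steps South, `2p+2` steps East, total `8p+6` steps). -/
def spiralDir (t p : ℕ) : ℤ × ℤ :=
  if h : t < 8 * p + 6 then
    if t < 2 * p + 1 then (0, 1)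
    else if t < 4 * p + 2 then (-1, 0)
    else if t < 6 * p + 4 then (0, -1)
    else (1, 0)
  else spiralDir (t - (8 * p + 6)) (p + 1)
termination_by t
decreasing_by omega

/-- The square spiral trajectory starting at the origin: position after `t` steps. -/
def spiral (t : ℕ) : ℤ × ℤ := ∑ i ∈ Finset.range t, spiralDir i 0

def loopPos (p s : ℕ) : ℤ × ℤ :=
  if s ≤ 2*p+1 then ((p:ℤ), (s:ℤ) - p)
  else if s ≤ 4*p+2 then (3*(p:ℤ)+1 - s, (p:ℤ)+1)
  else if s ≤ 6*p+4 then (-((p:ℤ)+1), 5*(p:ℤ)+3 - s)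
  else ((s:ℤ) - (7*(p:ℤ)+5), -((p:ℤ)+1))

lemma spiralDir_shift (s p : ℕ) : spiralDir (s + (8*p+6)) p = spiralDir s (p+1) := by
  rw [spiralDir]
  rw [dif_neg (by omega)]
  congr 1
  omega

lemma spiralDir_zero (p s : ℕ) : spiralDir (4*p^2+2*p+s) 0 = spiralDir s p := by
  induction p generalizing s with
  | zero => norm_num
  | succ p ih =>
      have h : 4*(p+1)^2+2*(p+1)+s = 4*p^2+2*p+(s+(8*p+6)) := by ring
      rw [h, ih, spiralDir_shift]

lemma spiral_succ (t : ℕ) : spiral (t+1) = spiral t + spiralDir t 0 :=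
  Finset.sum_range_succ _ t

lemma loopPos_step (p n : ℕ) (hn : n < 8*p+6) :
    loopPos p n + spiralDir n p = loopPos p (n+1) := by
  rw [spiralDir, dif_pos hn]
  unfold loopPos
  split_ifs <;> simp [Prod.ext_iff] <;> omega

lemma spiral_loop_aux (p : ℕ) (h0 : spiral (4*p^2+2*p) = ((p:ℤ), -(p:ℤ))) :
    ∀ s ≤ 8*p+6, spiral (4*p^2+2*p+s) = loopPos p s := by
  intro s hs
  induction s with
  | zero =>
      simpa [loopPos] using h0
  | succ n ih =>
      rw [← Nat.add_assoc, spiral_succ, spiralDir_zero, ih (by omega),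
        loopPos_step p n (by omega)]

lemma spiral_start (p : ℕ) : spiral (4*p^2+2*p) = ((p:ℤ), -(p:ℤ)) := by
  induction p with
  | zero => simp [spiral, Prod.zero_eq_mk]
  | succ p ih =>
      have h := spiral_loop_aux p ih (8*p+6) le_rfl
      have harith : 4*(p+1)^2+2*(p+1) = 4*p^2+2*p+(8*p+6) := by ring
      rw [harith, h]
      simp only [loopPos]
      rw [if_neg (by omega), if_neg (by omega), if_neg (by omega)]
      simp [Prod.ext_iff]
      omega

lemma spiral_loop (p s : ℕ) (hs : s ≤ 8*p+6) : spiral (4*p^2+2*p+s) = loopPos p s :=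
  spiral_loop_aux p (spiral_start p) s hs

lemma loopPos_inj {p s p' s' : ℕ} (hs : s < 8*p+6) (hs' : s' < 8*p'+6)
    (h : loopPos p s = loopPos p' s') : p = p' ∧ s = s' := by
  unfold loopPos at h
  split_ifs at h <;> (rw [Prod.ext_iff] at h; obtain ⟨h1, h2⟩ := h) <;> omega

lemma exists_decomp (t : ℕ) : ∃ p s, s < 8*p+6 ∧ t = 4*p^2+2*p+s := by
  induction t with
  | zero => exact ⟨0, 0, by norm_num⟩
  | succ t ih =>
      obtain ⟨p, s, hs, ht⟩ := ih
      by_cases hc : s + 1 < 8*p+6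
      · exact ⟨p, s+1, hc, by omega⟩
      · refine ⟨p+1, 0, by omega, ?_⟩
        have h2 : 4*(p+1)^2+2*(p+1) = 4*p^2+2*p+(8*p+6) := by ring
        rw [h2]
        omega

/-- The square spiral visits a new node at every step: it is injective. -/
theorem spiral_injective : Function.Injective spiral := by
  intro t₁ t₂ h
  obtain ⟨p, s, hs, rfl⟩ := exists_decomp t₁
  obtain ⟨p', s', hs', rfl⟩ := exists_decomp t₂
  rw [spiral_loop p s (by omega), spiral_loop p' s' (by omega)] at h
  obtain ⟨hp, hseq⟩ := loopPos_inj hs hs' h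
  subst hp; subst hseq; rfl
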